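/- Let A : H → Set H be maximal monotone with A(u) ≠ ∅ for every u ∈ H, let B : H → H be monotone and continuous, and let σ ∈ (0,1) and 0 < λ_min ≤ s. Let (w_j), (v_j) be sequences in H and (λ_j) a sequence in [λ_min, s] such that for every j: w_j − λ_jB(w_j) ∈ v_j + λ_jA(v_j) and λ_j‖B(w_j) − B(v_j)‖ ≤ σ‖w_j − v_j‖. If ‖w_j − v_j‖ → 0 and (w_j) converges weakly to some w* ∈ H, then w* ∈ Ω, i.e. −B(w*) ∈ A(w*). -/

import Mathlib

open RealInnerProductSpace Filter Topology

/-- If `(w_j)`, `(v_j)` satisfy the forward–backward inclusion and the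
line-search condition with steps `λ_j ∈ [λ_min, s]`, `‖w_j - v_j‖ → 0`, and `(w_j)`
converges weakly to `w*`, then `w*` solves the inclusion: `-B w* ∈ A w*`. -/
theorem weak_cluster_point_is_solution
    {H : Type*} [NormedAddCommGroup H] [InnerProductSpace ℝ H] [CompleteSpace H]
    (A : H → Set H) (B : H → H)
    (hAdom : ∀ u : H, (A u).Nonempty)
    (hAmono : ∀ u v : H, ∀ a ∈ A u, ∀ b ∈ A v, 0 ≤ ⟪a - b, u - v⟫)
    (hAmax : ∀ u v : H, (∀ w : H, ∀ z ∈ A w, 0 ≤ ⟪u - w, v - z⟫) → v ∈ A u)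
    (hBmono : ∀ u v : H, 0 ≤ ⟪B u - B v, u - v⟫)
    (hBcont : Continuous B)
    (σ lamMin s : ℝ) (hσ : σ ∈ Set.Ioo (0 : ℝ) 1) (hlamMin : 0 < lamMin) (hles : lamMin ≤ s)
    (w v : ℕ → H) (lam : ℕ → ℝ)
    (hlam : ∀ j : ℕ, lam j ∈ Set.Icc lamMin s)
    (hfb : ∀ j : ℕ, ∃ a ∈ A (v j), w j - lam j • B (w j) = v j + lam j • a)
    (hls : ∀ j : ℕ, lam j * ‖B (w j) - B (v j)‖ ≤ σ * ‖w j - v j‖)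
    (hdiff : Tendsto (fun j : ℕ => ‖w j - v j‖) atTop (𝓝 0))
    (wstar : H)
    (hweak : ∀ y : H, Tendsto (fun j : ℕ => ⟪w j, y⟫) atTop (𝓝 ⟪wstar, y⟫)) :
    -B wstar ∈ A wstar := by
  -- positivity of the steps
  have hlampos : ∀ j, 0 < lam j := fun j => lt_of_lt_of_le hlamMin (hlam j).1
  -- choose a_j ∈ A (v j)
  choose a ha hEq using hfb
  -- a j = (1 / lam j) • (w j - v j) - B (w j)
  have haEq : ∀ j, a j = (1 / lam j) • (w j - v j) - B (w j) := by
    intro j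
    have h2 : lam j • a j = (w j - lam j • B (w j)) - v j := by rw [hEq j]; abel
    have h3 : a j = (1 / lam j) • (lam j • a j) := by
      rw [smul_smul, one_div, inv_mul_cancel₀ (hlampos j).ne', one_smul]
    rw [h3, h2, smul_sub, smul_sub, smul_smul, one_div, inv_mul_cancel₀ (hlampos j).ne',
      one_smul]
    module
  -- the correction term c j → 0 strongly
  set c : ℕ → H := fun j => a j + B (w j) + (B (v j) - B (w j)) with hc
  have hcEq : ∀ j, c j = (1 / lam j) • (w j - v j) + (B (v j) - B (w j)) := by
    intro j; simp only [hc, haEq j]; abel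
  have hcnorm : ∀ j, ‖c j‖ ≤ ((1 + σ) / lamMin) * ‖w j - v j‖ := by
    intro j
    have h1 : ‖(1 / lam j) • (w j - v j)‖ ≤ (1 / lamMin) * ‖w j - v j‖ := by
      rw [norm_smul, Real.norm_eq_abs, abs_of_pos (div_pos one_pos (hlampos j))]
      gcongr
      exact (hlam j).1
    have h2 : ‖B (v j) - B (w j)‖ ≤ (σ / lamMin) * ‖w j - v j‖ := by
      rw [norm_sub_rev]
      have := hls j
      rw [div_mul_eq_mul_div, le_div_iff₀ hlamMin]
      calc ‖B (w j) - B (v j)‖ * lamMin ≤ ‖B (w j) - B (v j)‖ * lam j := by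
            gcongr; exact (hlam j).1
        _ = lam j * ‖B (w j) - B (v j)‖ := mul_comm _ _
        _ ≤ σ * ‖w j - v j‖ := hls j
    calc ‖c j‖ ≤ ‖(1 / lam j) • (w j - v j)‖ + ‖B (v j) - B (w j)‖ := by
          rw [hcEq j]; exact norm_add_le _ _
      _ ≤ (1 / lamMin) * ‖w j - v j‖ + (σ / lamMin) * ‖w j - v j‖ := add_le_add h1 h2
      _ = ((1 + σ) / lamMin) * ‖w j - v j‖ := by ring
  have hcnz : Tendsto (fun j => ‖c j‖) atTop (𝓝 0) := by
    apply squeeze_zero (fun j => norm_nonneg _) hcnorm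
    have : Tendsto (fun j => ((1 + σ) / lamMin) * ‖w j - v j‖) atTop (𝓝 (((1 + σ) / lamMin) * 0)) :=
      hdiff.const_mul _
    simpa using this
  -- w j - v j → 0 strongly
  have hdz : Tendsto (fun j => w j - v j) atTop (𝓝 0) :=
    tendsto_zero_iff_norm_tendsto_zero.2 hdiff
  -- weak convergence of w is bounded: Banach–Steinhaus
  obtain ⟨C, hC⟩ : ∃ C, ∀ j, ‖w j‖ ≤ C := by
    have hb : ∀ y : H, ∃ M, ∀ j, ‖(innerSL ℝ (w j)) y‖ ≤ M := by
      intro y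
      have ht : Tendsto (fun j => ‖⟪w j, y⟫‖) atTop (𝓝 ‖⟪wstar, y⟫‖) :=
        (continuous_norm.tendsto _).comp (hweak y)
      obtain ⟨M, hM⟩ := ht.bddAbove_range
      exact ⟨M, fun j => hM ⟨j, rfl⟩⟩
    obtain ⟨C', hC'⟩ := banach_steinhaus hb
    exact ⟨C', fun j => by simpa [innerSL_apply_norm] using hC' j⟩
  -- Step 1: for every u and z ∈ A u, 0 ≤ ⟪wstar - u, -B u - z⟫
  have step1 : ∀ u : H, ∀ z ∈ A u, 0 ≤ ⟪wstar - u, -B u - z⟫ := by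
    intro u z hz
    -- key inequality: ⟪v j - u, z + B u⟫ ≤ ⟪v j - u, c j⟫
    have hkey : ∀ j, ⟪v j - u, z + B u⟫ ≤ ⟪v j - u, c j⟫ := by
      intro j
      have h1 : 0 ≤ ⟪a j - z, v j - u⟫ := hAmono (v j) u (a j) (ha j) z hz
      have h2 : 0 ≤ ⟪B (v j) - B u, v j - u⟫ := hBmono (v j) u
      have h3 : 0 ≤ ⟪(a j + B (v j)) - (z + B u), v j - u⟫ := by
        have : (a j + B (v j)) - (z + B u) = (a j - z) + (B (v j) - B u) := by abel
        rw [this, inner_add_left]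
        exact add_nonneg h1 h2
      have h4 : c j = a j + B (v j) := by rw [hc]; abel
      have h5 : 0 ≤ ⟪c j - (z + B u), v j - u⟫ := by rw [h4]; exact h3
      rw [inner_sub_left] at h5
      linarith [real_inner_comm (v j - u) (z + B u), real_inner_comm (v j - u) (c j)]
    -- LHS tends to ⟪wstar - u, z + B u⟫
    have hL : Tendsto (fun j => ⟪v j - u, z + B u⟫) atTop (𝓝 ⟪wstar - u, z + B u⟫) := by
      have h1 : ∀ j, ⟪v j - u, z + B u⟫ =
          ⟪w j, z + B u⟫ - ⟪w j - v j, z + B u⟫ - ⟪u, z + B u⟫ := by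
        intro j
        rw [← inner_sub_left, ← inner_sub_left]
        congr 1
        abel
      have h2 : Tendsto (fun j => ⟪w j - v j, z + B u⟫) atTop (𝓝 (0 : ℝ)) := by
        have : Continuous fun x : H => ⟪x, z + B u⟫ := continuous_inner.comp
          (continuous_id.prodMk continuous_const)
        have := (this.tendsto 0).comp hdz
        simpa [Function.comp_def] using this
      have h3 := ((hweak (z + B u)).sub h2).sub (tendsto_const_nhds (x := ⟪u, z + B u⟫))
      simp only [h1]
      convert h3 using 2
      rw [inner_sub_left]
      simp
    -- RHS tends to 0
    have hR : Tendsto (fun j => ⟪v j - u, c j⟫) atTop (𝓝 (0 : ℝ)) := by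
      apply squeeze_zero_norm (a := fun j => (C + ‖w j - v j‖ + ‖u‖) * ‖c j‖)
      · intro j
        calc ‖⟪v j - u, c j⟫‖ ≤ ‖v j - u‖ * ‖c j‖ := norm_inner_le_norm _ _
          _ ≤ (C + ‖w j - v j‖ + ‖u‖) * ‖c j‖ := by
              gcongr
              calc ‖v j - u‖ ≤ ‖v j‖ + ‖u‖ := norm_sub_le _ _
                _ ≤ (‖w j‖ + ‖w j - v j‖) + ‖u‖ := by
                    gcongr
                    calc ‖v j‖ = ‖w j - (w j - v j)‖ := by congr 1; abel
                      _ ≤ ‖w j‖ + ‖w j - v j‖ := norm_sub_le _ _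
                _ ≤ (C + ‖w j - v j‖) + ‖u‖ := by gcongr; exact hC j
      · have h1 : Tendsto (fun j => C + ‖w j - v j‖ + ‖u‖) atTop (𝓝 (C + 0 + ‖u‖)) :=
          ((tendsto_const_nhds.add hdiff).add tendsto_const_nhds)
        have := h1.mul hcnz
        simpa using this
    have hle : ⟪wstar - u, z + B u⟫ ≤ 0 := le_of_tendsto_of_tendsto hL hR
      (Filter.Eventually.of_forall hkey)
    have : ⟪wstar - u, -B u - z⟫ = -⟪wstar - u, z + B u⟫ := by
      rw [← inner_neg_right]; congr 1; abel
    rw [this]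
    linarith
  -- Step 2: Minty's trick
  apply hAmax
  intro u z hz
  set d := wstar - u with hd
  -- for each n, consider u_n = wstar - (1/(n+2)) • d
  have key : ∀ n : ℕ, ⟪d, z⟫ ≤ ⟪d, -B (wstar - ((n : ℝ) + 2)⁻¹ • d)⟫ := by
    intro n
    set t : ℝ := ((n : ℝ) + 2)⁻¹ with htdef
    have ht0 : 0 < t := by positivity
    have ht1 : t < 1 := by
      have hn : (1 : ℝ) < (n : ℝ) + 2 := by
        have := Nat.cast_nonneg (α := ℝ) n
        linarith
      calc t = ((n : ℝ) + 2)⁻¹ := htdef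
        _ < 1 := by
          rw [inv_lt_one_iff₀]
          right; exact hn
    set ut : H := wstar - t • d with hut
    obtain ⟨zt, hzt⟩ := hAdom ut
    -- from step1 at (ut, zt)
    have h1 : 0 ≤ ⟪wstar - ut, -B ut - zt⟫ := step1 ut zt hzt
    have h1' : wstar - ut = t • d := by rw [hut]; abel
    rw [h1', real_inner_smul_left] at h1
    have h2 : 0 ≤ ⟪d, -B ut - zt⟫ := by
      by_contra hcon; push_neg at hcon; nlinarith
    -- from monotonicity of A at (ut, u)
    have h3 : 0 ≤ ⟪zt - z, ut - u⟫ := hAmono ut u zt hzt z hz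
    have h3' : ut - u = (1 - t) • d := by rw [hut, hd, sub_smul, one_smul]; abel
    rw [h3', real_inner_smul_right] at h3
    have h4 : 0 ≤ ⟪zt - z, d⟫ := by
      by_contra hcon; push_neg at hcon; nlinarith
    rw [inner_sub_left] at h4
    rw [inner_sub_right] at h2
    have h5 : ⟪d, zt⟫ ≤ ⟪d, -B ut⟫ := by linarith
    have h6 : ⟪d, z⟫ ≤ ⟪d, zt⟫ := by
      linarith [real_inner_comm d z, real_inner_comm d zt]
    exact le_trans h6 h5
  -- take the limit n → ∞
  have hlim : Tendsto (fun n : ℕ => ⟪d, -B (wstar - ((n : ℝ) + 2)⁻¹ • d)⟫) atTop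
      (𝓝 ⟪d, -B wstar⟫) := by
    have h1 : Tendsto (fun n : ℕ => ((n : ℝ) + 2)⁻¹) atTop (𝓝 0) := by
      have : Tendsto (fun n : ℕ => (n : ℝ) + 2) atTop atTop :=
        tendsto_atTop_add_const_right _ 2 tendsto_natCast_atTop_atTop
      exact this.inv_tendsto_atTop
    have h2 : Tendsto (fun n : ℕ => wstar - ((n : ℝ) + 2)⁻¹ • d) atTop (𝓝 wstar) := by
      have := (tendsto_const_nhds (x := wstar) (f := atTop (α := ℕ))).sub
        (h1.smul (tendsto_const_nhds (x := d)))
      simpa using this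
    have h3 : Continuous fun x : H => ⟪d, -B x⟫ :=
      continuous_inner.comp (continuous_const.prodMk (hBcont.neg))
    exact (h3.tendsto wstar).comp h2
  have hfin : ⟪d, z⟫ ≤ ⟪d, -B wstar⟫ := ge_of_tendsto' hlim key
  have : ⟪wstar - u, -B wstar - z⟫ = ⟪d, -B wstar⟫ - ⟪d, z⟫ := by
    rw [hd, inner_sub_right]
  rw [this]
  linarith
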